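/- arXiv:1606.04614 — 2 statements merged into one kernel-verified Lean document; each statement's English description precedes it below -/
import Mathlib

section
/- Let r ≥ 2, let p ∈ S be homogeneous of degree d, and let g ∈ GL_r(k). Then for every 0 ≤ j ≤ d, the coefficient of the monomial x_1^{d-j} x_2^{j} in g·p equals the sum, over all tuples (i_1,…,i_r) of non-negative integers with i_1 + … + i_r = j, of (∏_{a=1}^{r} g_{2a}^{i_a} / i_a!) times the iterated partial derivative ∂^{j} p / (∂x_1^{i_1} ⋯ ∂x_r^{i_r}) evaluated at the point (x_1,…,x_r) = (g_{11},…,g_{1r}). -/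
open MvPolynomial

/-- The action of a matrix `g` on polynomials, determined by `g · xᵢ = ∑ⱼ gⱼᵢ xⱼ`. -/
noncomputable def glAct {k : Type*} [CommSemiring k] {r : ℕ}
    (g : Matrix (Fin r) (Fin r) k) (p : MvPolynomial (Fin r) k) : MvPolynomial (Fin r) k :=
  aeval (fun i => ∑ j, MvPolynomial.C (g j i) * X j) p

/-- The iterated partial derivative `∂^{i₁}_{x₁} ⋯ ∂^{iᵣ}_{xᵣ}` applied to a polynomial. -/
noncomputable def iterPDeriv {k : Type*} [CommSemiring k] {r : ℕ}
    (i : Fin r → ℕ) (p : MvPolynomial (Fin r) k) : MvPolynomial (Fin r) k :=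
  (List.finRange r).foldr (fun a q => (MvPolynomial.pderiv a)^[i a] q) p

namespace Stmt0Aux

variable {k : Type*} [CommSemiring k] {r : ℕ}

lemma iterate_pderiv_monomial (a : Fin r) (n : ℕ) (m : Fin r →₀ ℕ) (c : k) :
    (pderiv a)^[n] (monomial m c) =
      monomial (m - Finsupp.single a n) (c * ((m a).descFactorial n : ℕ)) := by
  induction n with
  | zero => simp
  | succ n ih =>
      rw [Function.iterate_succ_apply', ih, pderiv_monomial, tsub_tsub, ← Finsupp.single_add,
        Finsupp.tsub_apply, Finsupp.single_eq_same, Nat.descFactorial_succ, Nat.cast_mul]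
      ring_nf

lemma list_single_apply (i : Fin r → ℕ) (a : Fin r) :
    ∀ (l : List (Fin r)), a ∉ l → ((l.map fun b => Finsupp.single b (i b)).sum) a = 0
  | [], _ => rfl
  | b :: l, h => by
      rw [List.map_cons, List.sum_cons, Finsupp.add_apply,
        Finsupp.single_eq_of_ne (by rintro rfl; exact h List.mem_cons_self),
        list_single_apply i a l (fun hl => h (List.mem_cons_of_mem b hl)), add_zero]

lemma foldr_pderiv_monomial (i : Fin r → ℕ) :
    ∀ (l : List (Fin r)), l.Nodup → ∀ (m : Fin r →₀ ℕ) (c : k),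
      l.foldr (fun a q => (pderiv a)^[i a] q) (monomial m c) =
        monomial (m - (l.map fun a => Finsupp.single a (i a)).sum)
          (c * ((l.map fun a => ((m a).descFactorial (i a) : k)).prod))
  | [], _, m, c => by simp
  | a :: l, hl, m, c => by
      rw [List.foldr_cons, foldr_pderiv_monomial i l (List.nodup_cons.mp hl).2 m c,
        iterate_pderiv_monomial, List.map_cons, List.sum_cons, List.map_cons, List.prod_cons]
      have ha : a ∉ l := (List.nodup_cons.mp hl).1
      have h1 : (m - (l.map fun b => Finsupp.single b (i b)).sum) a = m a := by
        rw [Finsupp.tsub_apply, list_single_apply i a l ha, Nat.sub_zero]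
      rw [h1, tsub_tsub]
      congr 1
      · rw [add_comm]
      · ring

lemma sum_single_apply (i : Fin r → ℕ) (a : Fin r) :
    (∑ b, Finsupp.single b (i b)) a = i a := by
  rw [Finset.sum_apply']
  simp [Finsupp.single_apply]

lemma iterPDeriv_monomial (i : Fin r → ℕ) (m : Fin r →₀ ℕ) (c : k) :
    iterPDeriv i (monomial m c) =
      monomial (m - ∑ a, Finsupp.single a (i a))
        (c * ∏ a, ((m a).descFactorial (i a) : k)) := by
  rw [iterPDeriv, foldr_pderiv_monomial i _ (List.nodup_finRange r), Fin.sum_univ_def,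
    Fin.prod_univ_def]

lemma iterPDeriv_sum {α : Type*} (i : Fin r → ℕ) (s : Finset α)
    (f : α → MvPolynomial (Fin r) k) :
    iterPDeriv i (∑ x ∈ s, f x) = ∑ x ∈ s, iterPDeriv i (f x) := by
  have key : ∀ (l : List (Fin r)) (p : MvPolynomial (Fin r) k),
      l.foldr (fun a q => (pderiv a)^[i a] q) p =
      (l.foldr (fun a F => (pderiv a).toLinearMap ^ i a * F)
        (LinearMap.id : MvPolynomial (Fin r) k →ₗ[k] MvPolynomial (Fin r) k)) p := by
    intro l
    induction l with
    | nil => intro p; rfl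
    | cons a l ih =>
        intro p
        rw [List.foldr_cons, List.foldr_cons, ih, Module.End.mul_apply, Module.End.pow_apply]
        rfl
  simp only [iterPDeriv, key, map_sum]

lemma coeff_kill (i0 i1 : Fin r) (e : Fin r →₀ ℕ) (he : ∀ b, b ≠ i0 → b ≠ i1 → e b = 0)
    (q : MvPolynomial (Fin r) k) :
    coeff e (aeval (fun b => if b = i0 then X i0 else if b = i1 then X i1 else 0) q)
      = coeff e q := by
  conv_lhs => rw [q.as_sum]
  conv_rhs => rw [q.as_sum]
  rw [map_sum, coeff_sum, coeff_sum]
  refine Finset.sum_congr rfl fun m _ => ?_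
  by_cases hsupp : ∀ b, b ≠ i0 → b ≠ i1 → m b = 0
  · congr 1
    rw [aeval_monomial, Finsupp.prod_pow, monomial_eq, Finsupp.prod_pow, algebraMap_eq]
    congr 1
    refine Finset.prod_congr rfl fun b _ => ?_
    by_cases h0 : b = i0
    · subst h0; rw [if_pos rfl]
    by_cases h1 : b = i1
    · subst h1; rw [if_neg h0, if_pos rfl]
    · rw [hsupp b h0 h1, pow_zero, pow_zero]
  · push_neg at hsupp
    obtain ⟨b, hb0, hb1, hb⟩ := hsupp
    rw [aeval_monomial, Finsupp.prod_pow]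
    have hz : (if b = i0 then X i0 else if b = i1 then (X i1 : MvPolynomial (Fin r) k) else 0)
        ^ m b = 0 := by
      rw [if_neg hb0, if_neg hb1, zero_pow hb]
    rw [Finset.prod_eq_zero (Finset.mem_univ b) hz, mul_zero, coeff_zero, coeff_monomial,
      if_neg (by rintro rfl; exact hb (he b hb0 hb1))]

lemma kill_glAct (i0 i1 : Fin r) (h01 : i0 ≠ i1) (G : Matrix (Fin r) (Fin r) k)
    (p : MvPolynomial (Fin r) k) :
    aeval (fun b => if b = i0 then X i0 else if b = i1 then X i1 else 0) (glAct G p)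
      = aeval (fun a => C (G i1 a) * X i1 + C (G i0 a) * X i0) p := by
  rw [glAct, comp_aeval_apply]
  have hfun : (fun a => (aeval fun b => if b = i0 then X i0 else if b = i1 then X i1 else
      (0 : MvPolynomial (Fin r) k)) (∑ b, C (G b a) * X b))
      = fun a => C (G i1 a) * X i1 + C (G i0 a) * X i0 := by
    funext a
    rw [map_sum]
    have hterm : ∀ b : Fin r,
        (aeval (fun b => if b = i0 then X i0 else if b = i1 then (X i1 : MvPolynomial (Fin r) k)
          else 0)) (C (G b a) * X b)
        = (if b = i1 then C (G i1 a) * X i1 else 0)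
          + (if b = i0 then C (G i0 a) * X i0 else 0) := by
      intro b
      rw [map_mul, aeval_C, aeval_X, algebraMap_eq]
      by_cases h0 : b = i0
      · subst h0; rw [if_pos rfl, if_neg h01, if_pos rfl, zero_add]
      by_cases h1 : b = i1
      · subst h1; rw [if_neg h0, if_pos rfl, if_pos rfl, if_neg h0, add_zero]
      · rw [if_neg h0, if_neg h1, if_neg h1, if_neg h0, mul_zero, add_zero]
    rw [Finset.sum_congr rfl fun b _ => hterm b, Finset.sum_add_distrib,
      Finset.sum_ite_eq' Finset.univ i1 (fun _ => C (G i1 a) * X i1),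
      Finset.sum_ite_eq' Finset.univ i0 (fun _ => C (G i0 a) * X i0),
      if_pos (Finset.mem_univ i1), if_pos (Finset.mem_univ i0)]
  rw [hfun]

lemma prod_monomial {α : Type*} (s : Finset α) (f : α → (Fin r →₀ ℕ)) (c : α → k) :
    ∏ a ∈ s, monomial (f a) (c a) = monomial (∑ a ∈ s, f a) (∏ a ∈ s, c a) := by
  induction s using Finset.cons_induction with
  | empty => simp
  | cons a s ha ih => rw [Finset.prod_cons, Finset.sum_cons, Finset.prod_cons, ih, monomial_mul]

end Stmt0Aux

section Key

open Stmt0Aux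

variable {k : Type*} [Field k] [CharZero k] {r : ℕ}

lemma stmt0_key (i0 i1 : Fin r) (h01 : i0 ≠ i1) (g0 g1 : Fin r → k) (d j : ℕ) (hj : j ≤ d)
    (m : Fin r →₀ ℕ) (c : k) (hm : ∑ a, m a = d) :
    coeff (Finsupp.single i0 (d - j) + Finsupp.single i1 j)
        (aeval (fun a => C (g1 a) * X i1 + C (g0 a) * X i0) (monomial m c))
      = ∑ i ∈ Finset.Nat.antidiagonalTuple r j,
          (∏ a, g1 a ^ i a / ((i a).factorial : k)) * eval g0 (iterPDeriv i (monomial m c)) := by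
  classical
  -- rewrite the right-hand side terms
  have hRHS : ∀ i : Fin r → ℕ,
      (∏ a, g1 a ^ i a / ((i a).factorial : k)) * eval g0 (iterPDeriv i (monomial m c))
      = c * ∏ a, (g1 a ^ i a * g0 a ^ (m a - i a) * ((m a).choose (i a) : k)) := by
    intro i
    rw [iterPDeriv_monomial, eval_monomial, Finsupp.prod_pow]
    have hS : ∀ a : Fin r, (m - ∑ b, Finsupp.single b (i b)) a = m a - i a := by
      intro a; rw [Finsupp.tsub_apply, sum_single_apply]
    simp only [hS]
    have hfac : ∀ a : Fin r,
        g1 a ^ i a / ((i a).factorial : k) * (((m a).descFactorial (i a) : k)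
          * g0 a ^ (m a - i a))
        = g1 a ^ i a * g0 a ^ (m a - i a) * ((m a).choose (i a) : k) := by
      intro a
      rw [Nat.descFactorial_eq_factorial_mul_choose, Nat.cast_mul]
      have h0 : (((i a).factorial : k)) ≠ 0 := Nat.cast_ne_zero.mpr (Nat.factorial_ne_zero _)
      field_simp
    have h2 : ∏ a, (g1 a ^ i a * g0 a ^ (m a - i a) * ((m a).choose (i a) : k))
        = (∏ a, g1 a ^ i a / ((i a).factorial : k))
          * ∏ a, (((m a).descFactorial (i a) : k) * g0 a ^ (m a - i a)) := by
      rw [← Finset.prod_mul_distrib]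
      exact Finset.prod_congr rfl fun a _ => (hfac a).symm
    rw [h2, Finset.prod_mul_distrib]
    ring
  -- expand the left-hand side
  rw [aeval_monomial, algebraMap_eq, Finsupp.prod_pow]
  have hb : ∀ a : Fin r, (C (g1 a) * X i1 + C (g0 a) * X i0) ^ m a
      = ∑ t ∈ Finset.range (m a + 1),
          monomial (Finsupp.single i1 t + Finsupp.single i0 (m a - t))
            (g1 a ^ t * g0 a ^ (m a - t) * ((m a).choose t : k)) := by
    intro a
    rw [add_pow]
    refine Finset.sum_congr rfl fun t _ => ?_
    rw [mul_pow, mul_pow, ← map_pow, ← map_pow, X_pow_eq_monomial, X_pow_eq_monomial,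
      C_mul_monomial, C_mul_monomial, monomial_mul,
      show (((m a).choose t : ℕ) : MvPolynomial (Fin r) k) = C (((m a).choose t : ℕ) : k) from
        (map_natCast (C : k →+* MvPolynomial (Fin r) k) _).symm,
      mul_comm _ (C (((m a).choose t : ℕ) : k)), C_mul_monomial]
    congr 1
    ring
  rw [Finset.prod_congr rfl fun a _ => hb a, Finset.prod_univ_sum]
  rw [Finset.mul_sum, coeff_sum]
  have hexp : ∀ i : Fin r → ℕ,
      ∑ a, (Finsupp.single i1 (i a) + Finsupp.single i0 (m a - i a))
      = Finsupp.single i0 (∑ a, (m a - i a)) + Finsupp.single i1 (∑ a, i a) := by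
    intro i
    have hs : ∀ (b : Fin r) (f : Fin r → ℕ),
        ∑ a, Finsupp.single b (f a) = Finsupp.single b (∑ a, f a) := by
      intro b f
      ext e
      rw [Finset.sum_apply', Finsupp.single_apply]
      split_ifs with hbe
      · subst hbe; simp
      · simp [Finsupp.single_apply, hbe]
    rw [Finset.sum_add_distrib, hs i1 i, hs i0 (fun a => m a - i a), add_comm]
  have hcond : ∀ A B : ℕ, (Finsupp.single i0 B + Finsupp.single i1 A
      = Finsupp.single i0 (d - j) + Finsupp.single i1 j) ↔ (B = d - j ∧ A = j) := by
    intro A B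
    constructor
    · intro h
      have h0 := DFunLike.congr_fun h i0
      have h1 := DFunLike.congr_fun h i1
      simp only [Finsupp.add_apply, Finsupp.single_eq_same, Finsupp.single_eq_of_ne h01,
        Finsupp.single_eq_of_ne (Ne.symm h01), add_zero, zero_add] at h0 h1
      exact ⟨h0, h1⟩
    · rintro ⟨rfl, rfl⟩; rfl
  have hterm : ∀ i ∈ Fintype.piFinset (fun a => Finset.range (m a + 1)),
      coeff (Finsupp.single i0 (d - j) + Finsupp.single i1 j)
        (C c * ∏ a, monomial (Finsupp.single i1 (i a) + Finsupp.single i0 (m a - i a))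
          (g1 a ^ i a * g0 a ^ (m a - i a) * ((m a).choose (i a) : k)))
      = if ∑ a, i a = j then
          c * ∏ a, (g1 a ^ i a * g0 a ^ (m a - i a) * ((m a).choose (i a) : k)) else 0 := by
    intro i hi
    rw [prod_monomial, C_mul_monomial, hexp i, coeff_monomial]
    by_cases hij : ∑ a, i a = j
    · have hle : ∀ a, i a ≤ m a := fun a =>
        Nat.lt_succ_iff.mp (Finset.mem_range.mp (Fintype.mem_piFinset.mp hi a))
      have hsub : ∑ a, (m a - i a) = d - j := by
        rw [Finset.sum_tsub_distrib Finset.univ (fun a _ => hle a), hm, hij]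
      rw [if_pos ((hcond _ _).mpr ⟨hsub, hij⟩), if_pos hij]
    · rw [if_neg (fun h => hij ((hcond _ _).mp h).2), if_neg hij]
  rw [Finset.sum_congr rfl hterm, ← Finset.sum_filter]
  rw [Finset.sum_subset
    (fun i hi => Finset.Nat.mem_antidiagonalTuple.mpr (Finset.mem_filter.mp hi).2)
    (fun i hi hni => by
      have hsum : ∑ a, i a = j := Finset.Nat.mem_antidiagonalTuple.mp hi
      have hnp : i ∉ Fintype.piFinset (fun a => Finset.range (m a + 1)) := fun hp =>
        hni (Finset.mem_filter.mpr ⟨hp, hsum⟩)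
      obtain ⟨a, ha⟩ : ∃ a, ¬ i a ∈ Finset.range (m a + 1) := by
        by_contra h; push_neg at h; exact hnp (Fintype.mem_piFinset.mpr h)
      have hlt : m a < i a := by
        rw [Finset.mem_range] at ha; omega
      refine mul_eq_zero_of_right c (Finset.prod_eq_zero (Finset.mem_univ a) ?_)
      rw [Nat.choose_eq_zero_of_lt hlt, Nat.cast_zero, mul_zero])]
  exact Finset.sum_congr rfl fun i _ => (hRHS i).symm

end Key

/-- For `r ≥ 2`, `p` homogeneous of degree `d`, `g ∈ GL_r(k)` and `0 ≤ j ≤ d`,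
the coefficient of `x₁^{d-j} x₂^j` in `g·p` equals
`∑_{i₁+⋯+iᵣ=j} (∏ₐ g_{2a}^{iₐ}/iₐ!) · (∂^j p/∂x₁^{i₁}⋯∂xᵣ^{iᵣ})(g_{11},…,g_{1r})`. -/
theorem stmt0 {k : Type*} [Field k] [CharZero k] {r : ℕ} (hr : 2 ≤ r)
    (d : ℕ) (p : MvPolynomial (Fin r) k) (hp : p.IsHomogeneous d)
    (g : GL (Fin r) k) (j : ℕ) (hj : j ≤ d) :
    MvPolynomial.coeff
        (Finsupp.single (⟨0, by omega⟩ : Fin r) (d - j) +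
          Finsupp.single (⟨1, by omega⟩ : Fin r) j)
        (glAct (g : Matrix (Fin r) (Fin r) k) p)
      = ∑ i ∈ Finset.Nat.antidiagonalTuple r j,
          (∏ a, (g : Matrix (Fin r) (Fin r) k) ⟨1, by omega⟩ a ^ i a / ((i a).factorial : k)) *
            MvPolynomial.eval (fun a => (g : Matrix (Fin r) (Fin r) k) ⟨0, by omega⟩ a)
              (iterPDeriv i p) := by
  classical
  set G := (g : Matrix (Fin r) (Fin r) k) with hG
  set i0 : Fin r := ⟨0, by omega⟩ with hi0
  set i1 : Fin r := ⟨1, by omega⟩ with hi1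
  have h01 : i0 ≠ i1 := by
    intro h
    have h2 := congrArg Fin.val h
    simp [hi0, hi1] at h2
  have he : ∀ b, b ≠ i0 → b ≠ i1 →
      (Finsupp.single i0 (d - j) + Finsupp.single i1 j) b = 0 := by
    intro b hb0 hb1
    rw [Finsupp.add_apply, Finsupp.single_eq_of_ne' (Ne.symm hb0),
      Finsupp.single_eq_of_ne' (Ne.symm hb1), add_zero]
  rw [← Stmt0Aux.coeff_kill i0 i1 _ he (glAct G p), Stmt0Aux.kill_glAct i0 i1 h01 G p]
  conv_lhs => rw [p.as_sum]
  conv_rhs => rw [p.as_sum]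
  rw [map_sum, coeff_sum]
  rw [Finset.sum_congr rfl (fun i (_ : i ∈ Finset.Nat.antidiagonalTuple r j) => by
    rw [Stmt0Aux.iterPDeriv_sum, map_sum, Finset.mul_sum])]
  rw [Finset.sum_comm]
  refine Finset.sum_congr rfl fun m hmem => ?_
  have hm : ∑ a, m a = d := by
    have h2 : Finsupp.degree m = ∑ a, m a :=
      Finset.sum_subset (Finset.subset_univ _) (fun a _ ha => Finsupp.notMem_support_iff.mp ha)
    rw [← h2, Finsupp.degree_eq_weight_one]
    exact hp (MvPolynomial.mem_support_iff.mp hmem)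
  exact stmt0_key i0 i1 h01 (fun a => G i0 a) (fun a => G i1 a) d j hj m (coeff m p) hm
end

section
/- Let v ∈ ⋀^b S_d be nonzero and suppose ω : ℝ^r → ℝ is a linear functional satisfying ω(ξ_{d,b}) < min_{χ ∈ Ξ_v} ω(χ) and ω(e_i) ≤ ω(e_{i+1}) for all 1 ≤ i ≤ r−1, where e_1,…,e_r is the standard basis of ℝ^r. Then for every invertible lower-triangular matrix l ∈ GL_r(k), one has ω(ξ_{d,b}) < min_{χ ∈ Ξ_{l·v}} ω(χ). -/
open MvPolynomial

/-- Degree-`d` monomials in `x₁,…,x_r`, encoded as exponent vectors, carrying the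
lexicographic order (`x₁ > x₂ > … > x_r`). -/
def MonIdx (r d : ℕ) : Type :=
  {f : Lex (Fin r →₀ ℕ) // ((ofLex f).sum fun _ e => e) = d}

noncomputable instance (r d : ℕ) : Fintype (MonIdx r d) :=
  Fintype.ofInjective
    (fun m : MonIdx r d =>
      (⟨⇑(ofLex m.1), by
          have h := m.2
          rw [Finsupp.sum_fintype _ _ fun _ => rfl] at h
          rw [Finset.Nat.mem_antidiagonalTuple]
          exact h⟩ :
        {g : Fin r → ℕ // g ∈ Finset.Nat.antidiagonalTuple r d}))
    (fun a b h => by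
      apply Subtype.ext
      have h' : ⇑(ofLex a.1) = ⇑(ofLex b.1) := congrArg Subtype.val h
      have h2 : ofLex a.1 = ofLex b.1 := DFunLike.coe_injective h'
      exact h2)

noncomputable instance (r d : ℕ) : LinearOrder (MonIdx r d) :=
  inferInstanceAs
    (LinearOrder {f : Lex (Fin r →₀ ℕ) // ((ofLex f).sum fun _ e => e) = d})

/-- The index set `W_{d,b}` of the basis of wedges of monomials of `⋀^b S_d`:
`b`-element sets of degree-`d` monomials. -/
def WedgeIdx (r d b : ℕ) : Type := {s : Finset (MonIdx r d) // s.card = b}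

noncomputable instance (r d b : ℕ) : Fintype (WedgeIdx r d b) := Subtype.fintype _

/-- The exponent `Finsupp` of a degree-`d` monomial. -/
def MonIdx.toFinsupp {r d : ℕ} (m : MonIdx r d) : Fin r →₀ ℕ :=
  ofLex m.1

/-- The matrix coefficient of the induced action of `g` on `⋀^b S_d` in the basis of wedges
of monomials: the coordinate at `t` of `g` applied to the basis wedge `s` (both sorted
decreasingly for the lexicographic order), i.e. the `b × b` determinant of coefficients. -/
noncomputable def transMat {k : Type*} [CommRing k] {r d b : ℕ}
    (g : Matrix (Fin r) (Fin r) k) (s t : WedgeIdx r d b) : k :=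
  Matrix.det (Matrix.of fun i j : Fin b =>
    MvPolynomial.coeff ((t.1.orderIsoOfFin t.2 i).1.toFinsupp)
      (glAct g (MvPolynomial.monomial ((s.1.orderIsoOfFin s.2 j).1.toFinsupp) 1)))

/-- The induced action of a matrix `g` on `⋀^b S_d`, expressed on coordinates with respect
to the basis `W_{d,b}` of wedges of monomials. -/
noncomputable def wedgeAct {k : Type*} [CommRing k] {r d b : ℕ}
    (g : Matrix (Fin r) (Fin r) k) (v : WedgeIdx r d b → k) : WedgeIdx r d b → k :=
  fun t => ∑ s, v s * transMat g s t

/-- The weight of a basis element of `W_{d,b}`: the sum of the exponent vectors of its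
monomials, an element of `ℤ^r`. -/
def wedgeWt {r d b : ℕ} (w : WedgeIdx r d b) : Fin r → ℤ :=
  fun i => ∑ m ∈ w.1, (ofLex m.1 i : ℤ)

/-- The state `Ξ_v ⊂ ℤ^r` of `v ∈ ⋀^b S_d`: the set of weights of basis elements with
nonzero coordinate in `v`. -/
def stateSet {k : Type*} [CommRing k] {r d b : ℕ} (v : WedgeIdx r d b → k) :
    Set (Fin r → ℤ) :=
  {χ | ∃ w, v w ≠ 0 ∧ wedgeWt w = χ}

/-- `Δ_v`: the convex hull in `ℝ^r` of the state of `v`. -/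
def hullOfState {k : Type*} [CommRing k] {r d b : ℕ} (v : WedgeIdx r d b → k) :
    Set (Fin r → ℝ) :=
  convexHull ℝ ((fun (χ : Fin r → ℤ) (i : Fin r) => (χ i : ℝ)) '' stateSet v)

/-- `ξ_{d,b} = (db/r)·(1,…,1) ∈ ℝ^r`. -/
noncomputable def xiPoint (r d b : ℕ) : Fin r → ℝ := fun _ => (d * b : ℝ) / r


/-! ### Auxiliary lemmas -/

/-- The `w`-weight of an exponent vector. -/
noncomputable def Wt {r : ℕ} (w : Fin r → ℝ) (μ : Fin r →₀ ℕ) : ℝ := ∑ i, (μ i : ℝ) * w i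

lemma Wt_add {r : ℕ} (w : Fin r → ℝ) (μ ν : Fin r →₀ ℕ) :
    Wt w (μ + ν) = Wt w μ + Wt w ν := by
  simp [Wt, add_mul, Finset.sum_add_distrib]

lemma Wt_single {r : ℕ} (w : Fin r → ℝ) (j : Fin r) : Wt w (Finsupp.single j 1) = w j := by
  simp [Wt, Finsupp.single_apply]

lemma support_mul_wt {k : Type} [Field k] {r : ℕ} {w : Fin r → ℝ} {c c' : ℝ}
    {p q : MvPolynomial (Fin r) k}
    (hp : ∀ μ ∈ p.support, c ≤ Wt w μ) (hq : ∀ μ ∈ q.support, c' ≤ Wt w μ) :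
    ∀ μ ∈ (p * q).support, c + c' ≤ Wt w μ := by
  intro μ hμ
  have := MvPolynomial.support_mul p q hμ
  rw [Finset.mem_add] at this
  obtain ⟨a, ha, bb, hb, rfl⟩ := this
  rw [Wt_add]
  exact add_le_add (hp a ha) (hq bb hb)

lemma support_one_wt {k : Type} [Field k] {r : ℕ} {w : Fin r → ℝ} :
    ∀ μ ∈ ((1 : MvPolynomial (Fin r) k)).support, (0 : ℝ) ≤ Wt w μ := by
  intro μ hμ
  rw [MvPolynomial.mem_support_iff, MvPolynomial.coeff_one] at hμ
  have : μ = 0 := by by_contra h; simp [Ne.symm h] at hμ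
  simp [this, Wt]

lemma support_pow_wt {k : Type} [Field k] {r : ℕ} {w : Fin r → ℝ} {c : ℝ}
    {p : MvPolynomial (Fin r) k}
    (hp : ∀ μ ∈ p.support, c ≤ Wt w μ) (e : ℕ) :
    ∀ μ ∈ (p ^ e).support, (e : ℝ) * c ≤ Wt w μ := by
  induction e with
  | zero => intro μ hμ; rw [pow_zero] at hμ; simpa using support_one_wt μ hμ
  | succ n ih =>
    intro μ hμ
    rw [pow_succ] at hμ
    have := support_mul_wt ih hp μ hμ
    push_cast
    linarith

lemma prod_wt {k : Type} [Field k] {r : ℕ} {w : Fin r → ℝ} {c : Fin r → ℝ}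
    (f : Fin r → MvPolynomial (Fin r) k) (g : Fin r → ℕ) (s : Finset (Fin r))
    (hf : ∀ i ∈ s, ∀ μ ∈ (f i).support, c i ≤ Wt w μ) :
    ∀ μ ∈ (∏ i ∈ s, f i ^ g i).support, (∑ i ∈ s, (g i : ℝ) * c i) ≤ Wt w μ := by
  induction s using Finset.induction with
  | empty => intro μ hμ; rw [Finset.prod_empty] at hμ
             simpa using support_one_wt μ hμ
  | insert _ _ hnot ih =>
    rename_i a s
    intro μ hμ
    rw [Finset.prod_insert hnot] at hμ
    rw [Finset.sum_insert hnot]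
    exact support_mul_wt (support_pow_wt (hf a (Finset.mem_insert_self a s)) (g a))
      (ih fun i hi => hf i (Finset.mem_insert_of_mem hi)) μ hμ

lemma lin_wt {k : Type} [Field k] {r : ℕ} (L : Matrix (Fin r) (Fin r) k)
    (hL : ∀ i j : Fin r, i < j → L i j = 0) {w : Fin r → ℝ} (hw : Monotone w) (i : Fin r) :
    ∀ μ ∈ (∑ j, MvPolynomial.C (L j i) * MvPolynomial.X j : MvPolynomial (Fin r) k).support,
      w i ≤ Wt w μ := by
  intro μ hμ
  rw [MvPolynomial.mem_support_iff] at hμ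
  have hex : ∃ j, L j i * MvPolynomial.coeff μ (MvPolynomial.X j) ≠ 0 := by
    by_contra h
    push_neg at h
    apply hμ
    rw [MvPolynomial.coeff_sum]
    simp only [MvPolynomial.coeff_C_mul]
    exact Finset.sum_eq_zero fun j _ => h j
  obtain ⟨j, hj⟩ := hex
  have hLji : L j i ≠ 0 := (mul_ne_zero_iff.1 hj).1
  have hcj : MvPolynomial.coeff μ (MvPolynomial.X j : MvPolynomial (Fin r) k) ≠ 0 :=
    (mul_ne_zero_iff.1 hj).2
  rw [MvPolynomial.coeff_X'] at hcj
  have hμj : μ = Finsupp.single j 1 := by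
    by_contra h; exact hcj (by simp [Ne.symm h])
  rw [hμj, Wt_single]
  exact hw (le_of_not_gt fun hlt => hLji (hL j i hlt))

lemma glAct_monomial_wt {k : Type} [Field k] {r : ℕ} (L : Matrix (Fin r) (Fin r) k)
    (hL : ∀ i j : Fin r, i < j → L i j = 0) {w : Fin r → ℝ} (hw : Monotone w)
    (ν : Fin r →₀ ℕ) :
    ∀ μ ∈ (glAct L (MvPolynomial.monomial ν (1 : k))).support, Wt w ν ≤ Wt w μ := by
  intro μ hμ
  rw [glAct, MvPolynomial.aeval_monomial, map_one, one_mul, Finsupp.prod] at hμ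
  have h := prod_wt (c := w) (fun i => ∑ j, MvPolynomial.C (L j i) * MvPolynomial.X j)
    (fun i => ν i) ν.support (fun i _ => lin_wt L hL hw i) μ hμ
  have heq : Wt w ν = ∑ i ∈ ν.support, (ν i : ℝ) * w i := by
    rw [Wt]
    refine (Finset.sum_subset (Finset.subset_univ _) ?_).symm
    intro i _ hi
    simp [Finsupp.notMem_support_iff.1 hi]
  rw [heq]
  exact h

lemma exists_perm_of_det_ne_zero {k : Type} [Field k] {n : ℕ}
    {M : Matrix (Fin n) (Fin n) k} (h : M.det ≠ 0) :
    ∃ σ : Equiv.Perm (Fin n), ∀ i, M (σ i) i ≠ 0 := by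
  rw [Matrix.det_apply] at h
  obtain ⟨σ, -, hσ⟩ := Finset.exists_ne_zero_of_sum_ne_zero h
  refine ⟨σ, fun i hz => hσ ?_⟩
  rw [Finset.prod_eq_zero (f := fun j => M (σ j) j) (Finset.mem_univ i) hz, smul_zero]

lemma w_monotone {r : ℕ} (w : Fin r → ℝ)
    (h : ∀ (i : Fin r) (h : (i : ℕ) + 1 < r), w i ≤ w ⟨(i : ℕ) + 1, h⟩) : Monotone w := by
  have key : ∀ n (hn : n < r) (i : Fin r), (i : ℕ) ≤ n → w i ≤ w ⟨n, hn⟩ := by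
    intro n
    induction n with
    | zero =>
      intro hn i hi
      have : i = ⟨0, hn⟩ := Fin.ext (Nat.le_zero.1 hi)
      rw [this]
    | succ n ih =>
      intro hn i hi
      rcases Nat.lt_or_ge (i : ℕ) (n + 1) with h1 | h1
      · exact le_trans (ih (Nat.lt_of_succ_lt hn) i (Nat.lt_succ_iff.1 h1))
          (h ⟨n, Nat.lt_of_succ_lt hn⟩ hn)
      · have : i = ⟨n + 1, hn⟩ := Fin.ext (le_antisymm hi h1)
        rw [this]
  intro i j hij
  simpa using key j.1 j.2 i hij

lemma omega_int {r : ℕ} (ω : (Fin r → ℝ) →ₗ[ℝ] ℝ) (χ : Fin r → ℤ) :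
    ω (fun i => (χ i : ℝ)) = ∑ i, (χ i : ℝ) * ω (Pi.single i 1) := by
  rw [LinearMap.pi_apply_eq_sum_univ]
  refine Finset.sum_congr rfl fun i _ => ?_
  rw [smul_eq_mul]
  have : (fun j => if i = j then (1 : ℝ) else 0) = Pi.single i 1 := by
    funext j; simp [Pi.single_apply, eq_comm]
  rw [this]

lemma wedge_omega {r d b : ℕ} (ω : (Fin r → ℝ) →ₗ[ℝ] ℝ) (s : WedgeIdx r d b) :
    ω (fun i => ((wedgeWt s i : ℤ) : ℝ)) =
      ∑ m ∈ s.1, Wt (fun i => ω (Pi.single i 1)) (ofLex m.1) := by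
  rw [omega_int]
  unfold wedgeWt Wt
  push_cast
  simp_rw [Finset.sum_mul]
  rw [Finset.sum_comm]

lemma transMat_wt {k : Type} [Field k] {r d b : ℕ} (L : Matrix (Fin r) (Fin r) k)
    (hL : ∀ i j : Fin r, i < j → L i j = 0) {w : Fin r → ℝ} (hw : Monotone w)
    {s t : WedgeIdx r d b} (h : transMat L s t ≠ 0) :
    ∑ m ∈ s.1, Wt w (ofLex m.1) ≤ ∑ m ∈ t.1, Wt w (ofLex m.1) := by
  obtain ⟨σ, hσ⟩ := exists_perm_of_det_ne_zero h
  have step : ∀ i : Fin b,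
      Wt w (ofLex (s.1.orderIsoOfFin s.2 i).1.1) ≤
        Wt w (ofLex (t.1.orderIsoOfFin t.2 (σ i)).1.1) := by
    intro i
    exact glAct_monomial_wt L hL hw _ _ (MvPolynomial.mem_support_iff.2 (hσ i))
  have hs : ∑ m ∈ s.1, Wt w (ofLex m.1) =
      ∑ i : Fin b, Wt w (ofLex (s.1.orderIsoOfFin s.2 i).1.1) := by
    rw [← Finset.sum_coe_sort s.1]
    exact (Fintype.sum_equiv (s.1.orderIsoOfFin s.2).toEquiv _ _ (fun i => rfl)).symm
  have ht : ∑ m ∈ t.1, Wt w (ofLex m.1) =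
      ∑ i : Fin b, Wt w (ofLex (t.1.orderIsoOfFin t.2 (σ i)).1.1) := by
    rw [← Finset.sum_coe_sort t.1,
      ← Fintype.sum_equiv (t.1.orderIsoOfFin t.2).toEquiv _
        (fun m => Wt w (ofLex m.1.1)) (fun i => rfl)]
    exact (Equiv.sum_comp σ _).symm
  rw [hs, ht]
  exact Finset.sum_le_sum fun i _ => step i

/-- **Lemma 5.3.** If `ω(ξ_{d,b}) < min ω(Ξ_v)` and `ω(e_i) ≤ ω(e_{i+1})`
for all `i`, then `ω(ξ_{d,b}) < min ω(Ξ_{l·v})` for every invertible lower-triangular `l`. -/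
theorem stmt15 {k : Type} [Field k] [IsAlgClosed k] [CharZero k] (r d b : ℕ)
    (v : WedgeIdx r d b → k) (hv : v ≠ 0) (ω : (Fin r → ℝ) →ₗ[ℝ] ℝ)
    (hsep : ∀ χ ∈ stateSet v, ω (xiPoint r d b) < ω (fun i => (χ i : ℝ)))
    (hmono : ∀ (i : Fin r) (h : (i : ℕ) + 1 < r),
      ω (Pi.single i 1) ≤ ω (Pi.single ⟨(i : ℕ) + 1, h⟩ 1))
    (L : Matrix (Fin r) (Fin r) k) (hL : ∀ i j : Fin r, i < j → L i j = 0)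
    (hLinv : IsUnit L.det) :
    ∀ χ ∈ stateSet (wedgeAct L v), ω (xiPoint r d b) < ω (fun i => (χ i : ℝ)) := by
  intro χ hχ
  obtain ⟨t, hne, rfl⟩ := hχ
  have hne' : (∑ s, v s * transMat L s t) ≠ 0 := hne
  obtain ⟨s, -, hs⟩ := Finset.exists_ne_zero_of_sum_ne_zero hne'
  have hvs : v s ≠ 0 := (mul_ne_zero_iff.1 hs).1
  have htm : transMat L s t ≠ 0 := (mul_ne_zero_iff.1 hs).2
  have hw : Monotone (fun i => ω (Pi.single i 1)) := w_monotone _ hmono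
  have h1 : ω (xiPoint r d b) < ω (fun i => (wedgeWt s i : ℝ)) := hsep _ ⟨s, hvs, rfl⟩
  calc ω (xiPoint r d b) < ω (fun i => (wedgeWt s i : ℝ)) := h1
    _ = ∑ m ∈ s.1, Wt (fun i => ω (Pi.single i 1)) (ofLex m.1) := wedge_omega ω s
    _ ≤ ∑ m ∈ t.1, Wt (fun i => ω (Pi.single i 1)) (ofLex m.1) := transMat_wt L hL hw htm
    _ = ω (fun i => (wedgeWt t i : ℝ)) := (wedge_omega ω t).symm
end
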